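/- Let N ≥ 3 and 1 ≤ k ≤ N−2 be integers, set m = N−k, and let a ∈ ℝ. Define v_a(y,z) = (−log‖y‖)^a ‖y‖^{(2+k−N)/2} on the open set Ω = {(y,z) ∈ ℝ^m × ℝ^k : 0 < ‖y‖ < 1}. Then at every point of Ω, Δ v_a = −((N−k−2)/2)² ‖y‖^{−2} v_a + a(a−1) ‖y‖^{−2} (log‖y‖)^{−2} v_a, where Δ is the Laplacian on ℝ^N. -/

import Mathlib

open MeasureTheory

/-- The Euclidean norm of the first `m` coordinates of `x ∈ ℝ^N`, i.e. `‖y‖`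
where `x = (y,z)` with `y ∈ ℝ^m` and `z ∈ ℝ^{N-m}`. -/
noncomputable def rhoY (m : ℕ) {N : ℕ} (x : EuclideanSpace ℝ (Fin N)) : ℝ :=
  Real.sqrt (∑ i : Fin N, if (i : ℕ) < m then x i ^ 2 else 0)

/-- The Euclidean Laplacian of `f : ℝ^n → ℝ` at `x`, as the trace of the second
derivative over the standard orthonormal basis. -/
noncomputable def lap {n : ℕ} (f : EuclideanSpace ℝ (Fin n) → ℝ)
    (x : EuclideanSpace ℝ (Fin n)) : ℝ :=
  ∑ i : Fin n, iteratedFDeriv ℝ 2 f x ![EuclideanSpace.single i 1, EuclideanSpace.single i 1]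

namespace LapAux

variable {N : ℕ}

/-- base function `(-(log t)/2)^p t^q`. -/
noncomputable def bb (p q t : ℝ) : ℝ := (-Real.log t / 2) ^ p * t ^ q

lemma hasDerivAt_bb (p q : ℝ) {t : ℝ} (ht : 0 < t) (ht1 : t < 1) :
    HasDerivAt (fun s => bb p q s)
      ((-p/2) * bb (p-1) (q-1) t + q * bb p (q-1) t) t := by
  have hlog : Real.log t < 0 := Real.log_neg ht ht1
  have hu : (0:ℝ) < -Real.log t / 2 := by linarith
  have h1 : HasDerivAt (fun s : ℝ => -Real.log s / 2) (-t⁻¹ / 2) t :=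
    ((Real.hasDerivAt_log ht.ne').neg).div_const 2
  have h2 : HasDerivAt (fun s : ℝ => (-Real.log s / 2) ^ p)
      ((-t⁻¹/2) * p * (-Real.log t / 2) ^ (p-1)) t :=
    h1.rpow_const (Or.inl hu.ne')
  have h3 : HasDerivAt (fun s : ℝ => s ^ q) (q * t ^ (q-1)) t :=
    Real.hasDerivAt_rpow_const (Or.inl ht.ne')
  have h4 := h2.mul h3
  simp only [bb]
  refine h4.congr_deriv ?_
  rw [Real.rpow_sub ht, Real.rpow_sub hu, Real.rpow_one, Real.rpow_one]
  field_simp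

lemma f_eq_bb (a α : ℝ) {t : ℝ} (ht : 0 < t) :
    (-Real.log (Real.sqrt t)) ^ a * Real.sqrt t ^ α = bb a (α/2) t := by
  rw [Real.log_sqrt ht.le, Real.sqrt_eq_rpow, ← Real.rpow_mul ht.le, bb,
    show (1/2:ℝ) * α = α/2 by ring, neg_div]

noncomputable def sQ (m N : ℕ) (x : EuclideanSpace ℝ (Fin N)) : ℝ :=
  ∑ i : Fin N, if (i : ℕ) < m then x i ^ 2 else 0

def FF (m N : ℕ) : Finset (Fin N) := Finset.univ.filter fun i => (i : ℕ) < m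

lemma sQ_eq (m : ℕ) (x : EuclideanSpace ℝ (Fin N)) :
    sQ m N x = ∑ i ∈ FF m N, x i ^ 2 := by
  rw [sQ, FF, Finset.sum_filter]

noncomputable def LL (m N : ℕ) :
    EuclideanSpace ℝ (Fin N) →L[ℝ] EuclideanSpace ℝ (Fin N) →L[ℝ] ℝ :=
  ∑ i ∈ FF m N, (2:ℝ) • ((EuclideanSpace.proj i).smulRight (EuclideanSpace.proj i))

lemma LL_apply (m : ℕ) (x v : EuclideanSpace ℝ (Fin N)) :
    LL m N x v = ∑ i ∈ FF m N, 2 * (x i * v i) := by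
  simp [LL, ContinuousLinearMap.sum_apply, ContinuousLinearMap.smulRight_apply,
    ContinuousLinearMap.smul_apply, smul_eq_mul, mul_assoc]

lemma hasFDerivAt_sQ (m : ℕ) (x : EuclideanSpace ℝ (Fin N)) :
    HasFDerivAt (fun y => sQ m N y) (LL m N x) x := by
  have h : HasFDerivAt (fun y : EuclideanSpace ℝ (Fin N) => ∑ i ∈ FF m N, y i * y i)
      (∑ i ∈ FF m N, (x i • (EuclideanSpace.proj i : EuclideanSpace ℝ (Fin N) →L[ℝ] ℝ)
        + x i • (EuclideanSpace.proj i : EuclideanSpace ℝ (Fin N) →L[ℝ] ℝ))) x :=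
    HasFDerivAt.fun_sum fun i _ => by
      have hp : HasFDerivAt (fun y : EuclideanSpace ℝ (Fin N) => y i)
          (EuclideanSpace.proj i : EuclideanSpace ℝ (Fin N) →L[ℝ] ℝ) x :=
        (EuclideanSpace.proj i : EuclideanSpace ℝ (Fin N) →L[ℝ] ℝ).hasFDerivAt
      exact hp.mul hp
  simp only [sQ_eq, pow_two]
  convert h using 1
  ext v
  simp [LL_apply, ContinuousLinearMap.sum_apply, ContinuousLinearMap.add_apply,
    ContinuousLinearMap.smul_apply, smul_eq_mul]
  exact Finset.sum_congr rfl fun i _ => by ring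

lemma LL_single_single (m : ℕ) (i : Fin N) :
    LL m N (EuclideanSpace.single i 1) (EuclideanSpace.single i 1)
      = if (i : ℕ) < m then (2:ℝ) else 0 := by
  rw [LL_apply]
  have : ∀ j ∈ FF m N, 2 * ((EuclideanSpace.single i (1:ℝ)) j *
      (EuclideanSpace.single i (1:ℝ)) j) = if j = i then (2:ℝ) else 0 := by
    intro j _
    by_cases h : j = i <;> simp [EuclideanSpace.single_apply, h]
  rw [Finset.sum_congr rfl this, Finset.sum_ite_eq' (FF m N) i (fun _ => (2:ℝ))]
  simp [FF]

lemma LL_single (m : ℕ) (x : EuclideanSpace ℝ (Fin N)) (i : Fin N) :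
    LL m N x (EuclideanSpace.single i 1)
      = if (i : ℕ) < m then 2 * x i else 0 := by
  rw [LL_apply]
  have : ∀ j ∈ FF m N, 2 * (x j * (EuclideanSpace.single i (1:ℝ)) j)
      = if j = i then 2 * x j else 0 := by
    intro j _
    by_cases h : j = i <;> simp [EuclideanSpace.single_apply, h]
  rw [Finset.sum_congr rfl this, Finset.sum_ite_eq' (FF m N) i (fun j => 2 * x j)]
  simp [FF]

end LapAux

open LapAux in
set_option maxHeartbeats 1000000 in
theorem laplacian_perturbed_ground_state (N k m : ℕ) (hN : 3 ≤ N) (hk1 : 1 ≤ k)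
    (hk2 : k ≤ N - 2) (hm : m = N - k) (a : ℝ) :
    ∀ x : EuclideanSpace ℝ (Fin N), 0 < rhoY m x → rhoY m x < 1 →
      lap (fun x : EuclideanSpace ℝ (Fin N) =>
          (-Real.log (rhoY m x)) ^ a * rhoY m x ^ (((2 : ℝ) + k - N) / 2)) x =
        -(((N : ℝ) - k - 2) / 2) ^ 2 *
            ((-Real.log (rhoY m x)) ^ a * rhoY m x ^ (((2 : ℝ) + k - N) / 2)) / (rhoY m x) ^ 2
          + a * (a - 1) *
            ((-Real.log (rhoY m x)) ^ a * rhoY m x ^ (((2 : ℝ) + k - N) / 2)) /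
              ((rhoY m x) ^ 2 * (Real.log (rhoY m x)) ^ 2) := by
  intro x hr0 hr1
  have hmN : m ≤ N := by omega
  have hkN : k ≤ N := by omega
  set β : ℝ := (((2:ℝ) + k - N) / 2) / 2 with hβ
  set t : ℝ := sQ m N x with htdef
  have hrho : ∀ y : EuclideanSpace ℝ (Fin N), rhoY m y = Real.sqrt (sQ m N y) :=
    fun _ => rfl
  have ht0 : 0 < t := by
    have := hr0; rw [hrho x] at this; exact Real.sqrt_pos.mp this
  have ht1 : t < 1 := by
    have h := hr1; rw [hrho x] at h
    nlinarith [Real.sq_sqrt ht0.le, Real.sqrt_nonneg (sQ m N x)]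
  -- the open set
  set Ω : Set (EuclideanSpace ℝ (Fin N)) := (fun y => sQ m N y) ⁻¹' (Set.Ioo 0 1) with hΩdef
  have hcont : Continuous (fun y : EuclideanSpace ℝ (Fin N) => sQ m N y) := by
    rw [continuous_iff_continuousAt]
    exact fun y => (hasFDerivAt_sQ m y).differentiableAt.continuousAt
  have hΩopen : IsOpen Ω := isOpen_Ioo.preimage hcont
  have hxΩ : x ∈ Ω := Set.mem_Ioo.mpr ⟨ht0, ht1⟩
  set f : EuclideanSpace ℝ (Fin N) → ℝ := fun y =>
    (-Real.log (rhoY m y)) ^ a * rhoY m y ^ (((2 : ℝ) + k - N) / 2) with hfdef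
  have hfeq : ∀ y ∈ Ω, f y = bb a β (sQ m N y) := by
    intro y hy
    show (-Real.log (rhoY m y)) ^ a * rhoY m y ^ (((2 : ℝ) + k - N) / 2) = bb a β (sQ m N y)
    rw [hrho y, hβ]
    exact f_eq_bb a _ hy.1
  set H1 : ℝ → ℝ := fun s => (-a/2) * bb (a-1) (β-1) s + β * bb a (β-1) s with hH1def
  set g1 : EuclideanSpace ℝ (Fin N) → (EuclideanSpace ℝ (Fin N) →L[ℝ] ℝ) :=
    fun y => H1 (sQ m N y) • LL m N y with hg1def
  have hfd : ∀ y ∈ Ω, HasFDerivAt f (g1 y) y := by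
    intro y hy
    have hb := (hasDerivAt_bb a β hy.1 hy.2).comp_hasFDerivAt y (hasFDerivAt_sQ m y)
    refine HasFDerivAt.congr_of_eventuallyEq hb ?_
    filter_upwards [hΩopen.mem_nhds hy] with z hz
    exact hfeq z hz
  have hfderiv_ev : (fun y => fderiv ℝ f y) =ᶠ[nhds x] g1 := by
    filter_upwards [hΩopen.mem_nhds hxΩ] with z hz
    exact (hfd z hz).fderiv
  set H2v : ℝ := (-a/2) * ((-(a-1)/2) * bb (a-1-1) (β-1-1) t + (β-1) * bb (a-1) (β-1-1) t)
    + β * ((-a/2) * bb (a-1) (β-1-1) t + (β-1) * bb a (β-1-1) t) with hH2def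
  have hH1t : HasDerivAt H1 H2v t :=
    ((hasDerivAt_bb (a-1) (β-1) ht0 ht1).const_mul (-a/2)).add
      ((hasDerivAt_bb a (β-1) ht0 ht1).const_mul β)
  have hg1d : HasFDerivAt g1
      (H1 t • (LL m N) + (H2v • LL m N x).smulRight (LL m N x)) x := by
    have hc : HasFDerivAt (fun y => H1 (sQ m N y)) (H2v • LL m N x) x :=
      by have := hH1t.comp_hasFDerivAt x (hasFDerivAt_sQ m x); exact this
    exact hc.smul (LL m N).hasFDerivAt
  have hsecond : fderiv ℝ (fderiv ℝ f) x
      = H1 t • (LL m N) + (H2v • LL m N x).smulRight (LL m N x) := by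
    rw [hfderiv_ev.fderiv_eq]
    exact hg1d.fderiv
  have hterm : ∀ i : Fin N,
      iteratedFDeriv ℝ 2 f x ![EuclideanSpace.single i 1, EuclideanSpace.single i 1]
        = H1 t * (LL m N (EuclideanSpace.single i 1) (EuclideanSpace.single i 1))
          + H2v * (LL m N x (EuclideanSpace.single i 1))
            * (LL m N x (EuclideanSpace.single i 1)) := by
    intro i
    rw [iteratedFDeriv_two_apply, hsecond]
    simp only [Matrix.cons_val_zero, Matrix.cons_val_one, Matrix.head_cons,
      ContinuousLinearMap.add_apply, ContinuousLinearMap.smul_apply,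
      ContinuousLinearMap.smulRight_apply, smul_eq_mul]
  have hlap : lap f x = H1 t * (2*(m:ℝ)) + H2v * (4*t) := by
    rw [lap]
    rw [Finset.sum_congr rfl (fun i _ => hterm i), Finset.sum_add_distrib]
    have hA : ∑ i : Fin N, H1 t *
        (LL m N (EuclideanSpace.single i 1) (EuclideanSpace.single i 1))
        = H1 t * (2*(m:ℝ)) := by
      rw [← Finset.mul_sum]
      congr 1
      have : ∀ i : Fin N, LL m N (EuclideanSpace.single i 1) (EuclideanSpace.single i 1)
          = if (i:ℕ) < m then (2:ℝ) else 0 := fun i => LL_single_single m i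
      rw [Finset.sum_congr rfl fun i _ => this i]
      rw [Fin.sum_univ_eq_sum_range (fun i => if i < m then (2:ℝ) else 0) N,
        ← Finset.sum_filter]
      have hf : Finset.filter (fun i => i < m) (Finset.range N) = Finset.range m := by
        ext j; simp only [Finset.mem_filter, Finset.mem_range]; omega
      rw [hf, Finset.sum_const, Finset.card_range, nsmul_eq_mul]
      ring
    have hB : ∑ i : Fin N, H2v * (LL m N x (EuclideanSpace.single i 1))
        * (LL m N x (EuclideanSpace.single i 1)) = H2v * (4*t) := by
      have : ∀ i : Fin N, H2v * (LL m N x (EuclideanSpace.single i 1))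
          * (LL m N x (EuclideanSpace.single i 1))
          = H2v * (4 * (if (i:ℕ) < m then x i ^ 2 else 0)) := by
        intro i
        rw [LL_single m x i]
        by_cases h : (i:ℕ) < m <;> simp [h] <;> try ring
      rw [Finset.sum_congr rfl fun i _ => this i, ← Finset.mul_sum]
      congr 1
      rw [← Finset.mul_sum]
      rw [htdef, sQ]
    rw [hA, hB]
  rw [hlap]
  -- final algebra
  rw [hrho x, ← htdef]
  have hsq : Real.sqrt t ^ 2 = t := Real.sq_sqrt ht0.le
  have hlogr : Real.log (Real.sqrt t) = Real.log t / 2 := Real.log_sqrt ht0.le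
  have hpow : Real.sqrt t ^ (((2:ℝ) + k - N) / 2) = t ^ β := by
    rw [Real.sqrt_eq_rpow, ← Real.rpow_mul ht0.le, hβ]
    norm_num
    ring_nf
  have hlog : Real.log t < 0 := Real.log_neg ht0 ht1
  have hu : (0:ℝ) < -Real.log t / 2 := by linarith
  rw [hlogr, hsq, hpow]
  rw [show -(Real.log t / 2) = -Real.log t / 2 by ring]
  have hmr : (m:ℝ) = (N:ℝ) - (k:ℝ) := by
    subst hm; push_cast [Nat.cast_sub hkN]; ring
  simp only [hH1def, hH2def, bb]
  simp only [Real.rpow_sub hu, Real.rpow_sub ht0, Real.rpow_one]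
  have hune : -Real.log t / 2 ≠ 0 := hu.ne'
  have hlne : Real.log t ≠ 0 := hlog.ne
  have htne : t ≠ 0 := ht0.ne'
  rw [hmr, hβ]
  field_simp
  ring
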